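/- Let r ≥ 2, s ≥ 1, t ≥ 0 with r dividing n, and let m be an integer with n ≥ m > (r(r−1)(s−1) + rt)² such that there exists a Hadamard matrix of size m. Then the chromatic number of the generalized Kneser hypergraph KH(n, r, n/r − t, s) is at most 2m. -/

import Mathlib

lemma KH_comb (n r s t : ℕ) (hr : 2 ≤ r) (hs : 1 ≤ s) (hrn : r ∣ n)
    (v : Fin r → Finset (Fin n)) (hk : 1 ≤ n / r - t)
    (hcard : ∀ i, (v i).card = n / r - t)
    (hint : ∀ i j, i ≠ j → ((v i) ∩ (v j)).card < s) :
    ∑ x : Fin n, |((Finset.univ.filter (fun l => x ∈ v l)).card : ℝ) - 1|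
      ≤ ((r * (r - 1) * (s - 1) + r * t : ℕ) : ℝ) := by
  classical
  set k : ℕ := n / r - t with hkdef
  have hq : k + t = n / r := by omega
  have hn : r * k + r * t = n := by
    have h := congrArg (fun z => r * z) hq
    simpa [Nat.mul_add, Nat.mul_div_cancel' hrn] using h
  set mult : Fin n → ℕ := fun x => (Finset.univ.filter (fun l => x ∈ v l)).card with hmult
  set μ : Fin n → ℝ := fun x => (mult x : ℝ) with hμ
  set c : Fin r → Fin n → ℝ := fun l x => if x ∈ v l then 1 else 0 with hc
  have hμc : ∀ x, μ x = ∑ l, c l x := by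
    intro x
    show ((Finset.univ.filter (fun l => x ∈ v l)).card : ℝ) = _
    rw [Finset.card_filter, Nat.cast_sum]
    exact Finset.sum_congr rfl fun l _ => by
      show ((if x ∈ v l then (1:ℕ) else 0 : ℕ) : ℝ) = if x ∈ v l then (1:ℝ) else 0
      split <;> simp
  -- total mass
  have hmass : ∑ x, μ x = (r : ℝ) * k := by
    calc ∑ x, μ x = ∑ x, ∑ l, c l x := by simp [hμc]
      _ = ∑ l, ∑ x, c l x := Finset.sum_comm
      _ = ∑ l : Fin r, (k : ℝ) := by
            refine Finset.sum_congr rfl fun l _ => ?_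
            simp [hc, hcard l]
      _ = (r : ℝ) * k := by simp [mul_comm]
  -- pairwise term
  have hpair : ∑ x, μ x * (μ x - 1) ≤ (r : ℝ) * ((r : ℝ) - 1) * ((s : ℝ) - 1) := by
    have hcc : ∀ l l' : Fin r, ∑ x, c l x * c l' x = ((v l ∩ v l').card : ℝ) := by
      intro l l'
      have h1 : ∀ x, c l x * c l' x = if x ∈ v l ∩ v l' then (1:ℝ) else 0 := by
        intro x
        by_cases h1 : x ∈ v l <;> by_cases h2 : x ∈ v l' <;>
          simp [hc, h1, h2, Finset.mem_inter]
      simp only [h1, Finset.sum_ite_mem, Finset.univ_inter]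
      simp
    have hsq : ∑ x, μ x * μ x = ∑ l, ∑ l', ((v l ∩ v l').card : ℝ) := by
      calc ∑ x, μ x * μ x = ∑ x, ∑ l, ∑ l', c l x * c l' x := by
            refine Finset.sum_congr rfl fun x _ => ?_
            rw [hμc, Finset.sum_mul_sum]
        _ = ∑ l, ∑ x, ∑ l', c l x * c l' x := Finset.sum_comm
        _ = ∑ l, ∑ l', ∑ x, c l x * c l' x := by
            exact Finset.sum_congr rfl fun l _ => Finset.sum_comm
        _ = ∑ l, ∑ l', ((v l ∩ v l').card : ℝ) := by
            exact Finset.sum_congr rfl fun l _ =>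
              Finset.sum_congr rfl fun l' _ => hcc l l'
    have hsplit : ∀ l : Fin r, ∑ l', ((v l ∩ v l').card : ℝ)
        = (k : ℝ) + ∑ l' ∈ Finset.univ.erase l, ((v l ∩ v l').card : ℝ) := by
      intro l
      rw [← Finset.add_sum_erase _ _ (Finset.mem_univ l)]
      simp [Finset.inter_self, hcard l]
    have hbound : ∀ l : Fin r, ∑ l' ∈ Finset.univ.erase l, ((v l ∩ v l').card : ℝ)
        ≤ ((r : ℝ) - 1) * ((s : ℝ) - 1) := by
      intro l
      have h1 : ∀ l' ∈ Finset.univ.erase l, ((v l ∩ v l').card : ℝ) ≤ (s : ℝ) - 1 := by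
        intro l' hl'
        have hne : l ≠ l' := (Finset.ne_of_mem_erase hl').symm
        have := hint l l' hne
        have h2 : ((v l ∩ v l').card : ℝ) + 1 ≤ (s : ℝ) := by exact_mod_cast this
        linarith
      calc ∑ l' ∈ Finset.univ.erase l, ((v l ∩ v l').card : ℝ)
          ≤ ∑ _l' ∈ Finset.univ.erase l, ((s : ℝ) - 1) := Finset.sum_le_sum h1
        _ = ((r : ℝ) - 1) * ((s : ℝ) - 1) := by
            rw [Finset.sum_const, Finset.card_erase_of_mem (Finset.mem_univ l)]
            simp [Nat.cast_sub (by omega : 1 ≤ r), nsmul_eq_mul]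
    have hsub : ∑ x, μ x * (μ x - 1) = (∑ x, μ x * μ x) - ∑ x, μ x := by
      rw [← Finset.sum_sub_distrib]
      exact Finset.sum_congr rfl fun x _ => by ring
    rw [hsub, hsq, hmass]
    have : ∑ l : Fin r, ((k : ℝ) + ∑ l' ∈ Finset.univ.erase l, ((v l ∩ v l').card : ℝ))
        ≤ ∑ _l : Fin r, ((k : ℝ) + ((r : ℝ) - 1) * ((s : ℝ) - 1)) :=
      Finset.sum_le_sum fun l _ => by linarith [hbound l]
    have h2 : ∑ l, ∑ l', ((v l ∩ v l').card : ℝ)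
        ≤ (r : ℝ) * ((k : ℝ) + ((r : ℝ) - 1) * ((s : ℝ) - 1)) := by
      calc ∑ l, ∑ l', ((v l ∩ v l').card : ℝ)
          = ∑ l : Fin r, ((k : ℝ) + ∑ l' ∈ Finset.univ.erase l, ((v l ∩ v l').card : ℝ)) :=
            Finset.sum_congr rfl fun l _ => hsplit l
        _ ≤ ∑ _l : Fin r, ((k : ℝ) + ((r : ℝ) - 1) * ((s : ℝ) - 1)) := this
        _ = (r : ℝ) * ((k : ℝ) + ((r : ℝ) - 1) * ((s : ℝ) - 1)) := by
            simp [Finset.sum_const, nsmul_eq_mul]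
            ring
    nlinarith [h2]
  -- pointwise identities
  set I0 : Fin n → ℝ := fun x => if mult x = 0 then 1 else 0 with hI0
  have hA : ∀ x, |μ x - 1| = μ x - 1 + 2 * I0 x := by
    intro x
    by_cases h : mult x = 0
    · simp [hμ, hI0, h]
      norm_num
    · have h1 : (1 : ℝ) ≤ μ x := by
        have h2 : 1 ≤ mult x := Nat.one_le_iff_ne_zero.mpr h
        show (1 : ℝ) ≤ ((mult x : ℕ) : ℝ)
        exact_mod_cast h2
      rw [abs_of_nonneg (by linarith)]
      simp [hI0, h]
  have hB : ∀ x, 2 * μ x + 2 * I0 x ≤ 2 + μ x * (μ x - 1) := by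
    intro x
    rcases Nat.lt_or_ge (mult x) 2 with h | h
    · have h0 : mult x = 0 ∨ mult x = 1 := by omega
      rcases h0 with h0 | h0 <;> simp [hμ, hI0, h0] <;> norm_num
    · have h1 : (2 : ℝ) ≤ μ x := by
        show (2 : ℝ) ≤ ((mult x : ℕ) : ℝ); exact_mod_cast h
      have h0 : mult x ≠ 0 := by omega
      simp only [hI0, if_neg h0]
      nlinarith
  have sumA : ∑ x, |μ x - 1| = (∑ x, μ x) - (n : ℝ) + 2 * ∑ x, I0 x := by
    calc ∑ x, |μ x - 1| = ∑ x, (μ x - 1 + 2 * I0 x) :=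
          Finset.sum_congr rfl fun x _ => hA x
      _ = (∑ x, μ x) - (n : ℝ) + 2 * ∑ x, I0 x := by
          rw [Finset.sum_add_distrib, Finset.sum_sub_distrib, ← Finset.mul_sum]
          simp [Finset.sum_const]
  have sumB : 2 * (∑ x, μ x) + 2 * (∑ x, I0 x) ≤ 2 * (n : ℝ) + ∑ x, μ x * (μ x - 1) := by
    have hsum := Finset.sum_le_sum (fun x (_ : x ∈ (Finset.univ : Finset (Fin n))) => hB x)
    rw [Finset.sum_add_distrib, Finset.sum_add_distrib, ← Finset.mul_sum, ← Finset.mul_sum]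
      at hsum
    simp only [Finset.sum_const, Finset.card_univ, Fintype.card_fin, nsmul_eq_mul] at hsum
    linarith
  have hQ : ((r * (r - 1) * (s - 1) + r * t : ℕ) : ℝ)
      = (r : ℝ) * ((r : ℝ) - 1) * ((s : ℝ) - 1) + (r : ℝ) * (t : ℝ) := by
    push_cast [Nat.cast_sub (by omega : 1 ≤ r), Nat.cast_sub hs]
    ring
  have hnR : (r : ℝ) * (k : ℝ) + (r : ℝ) * (t : ℝ) = (n : ℝ) := by exact_mod_cast hn
  rw [hQ]
  -- note goal sum is over mult = filter card, same as μ
  have : ∑ x : Fin n, |((Finset.univ.filter (fun l => x ∈ v l)).card : ℝ) - 1|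
      = ∑ x, |μ x - 1| := rfl
  rw [this, sumA, hmass]
  linarith

noncomputable def KHu (n r m : ℕ) (hmn : m ≤ n) (A : Finset (Fin n)) (j : Fin m) : ℝ :=
  (if Fin.castLE hmn j ∈ A then (1:ℝ) else 0) - 1 / r

noncomputable def KHd (n r m : ℕ) (hmn : m ≤ n) (M : Matrix (Fin m) (Fin m) ℝ)
    (i : Fin m) (A : Finset (Fin n)) : ℝ :=
  ∑ j, M j i * KHu n r m hmn A j

lemma KH_rownorm (m : ℕ) (M : Matrix (Fin m) (Fin m) ℝ)
    (hM1 : ∀ i j, M i j = 1 ∨ M i j = -1) (j : Fin m) :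
    ∑ i, M j i * M j i = m := by
  have : ∀ i : Fin m, M j i * M j i = 1 := by
    intro i; rcases hM1 j i with h | h <;> rw [h] <;> ring
  simp [this]

lemma KH_sum_sq (n r m : ℕ) (hmn : m ≤ n) (M : Matrix (Fin m) (Fin m) ℝ)
    (hM1 : ∀ i j, M i j = 1 ∨ M i j = -1)
    (hM2 : ∀ i j, i ≠ j → ∑ k, M i k * M j k = 0) (A : Finset (Fin n)) :
    ∑ i, (KHd n r m hmn M i A) ^ 2 = m * ∑ j, (KHu n r m hmn A j) ^ 2 := by
  set u := KHu n r m hmn A with hu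
  unfold KHd
  have step1 : ∑ i, (∑ j, M j i * u j) ^ 2
      = ∑ i, ∑ j, ∑ k, (M j i * u j) * (M k i * u k) := by
    congr 1; ext i
    rw [sq, Finset.sum_mul_sum]
  rw [step1, Finset.sum_comm]
  have step2 : ∀ j : Fin m, ∑ i, ∑ k, (M j i * u j) * (M k i * u k)
      = ∑ k, (u j * u k) * ∑ i, M j i * M k i := by
    intro j
    rw [Finset.sum_comm]
    congr 1; ext k
    rw [Finset.mul_sum]
    congr 1; ext i; ring
  simp_rw [step2]
  have step3 : ∀ j : Fin m, ∑ k, (u j * u k) * ∑ i, M j i * M k i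
      = u j ^ 2 * m := by
    intro j
    rw [Finset.sum_eq_single j]
    · rw [KH_rownorm m M hM1 j]; ring
    · intro k _ hkj
      rw [hM2 j k (Ne.symm hkj)]; ring
    · intro h; exact absurd (Finset.mem_univ j) h
  simp_rw [step3]
  rw [Finset.mul_sum]
  congr 1; ext j; ring

lemma KH_exists (n r m : ℕ) (hmn : m ≤ n) (hr : 2 ≤ r) (hm0 : 0 < m)
    (M : Matrix (Fin m) (Fin m) ℝ)
    (hM1 : ∀ i j, M i j = 1 ∨ M i j = -1)
    (hM2 : ∀ i j, i ≠ j → ∑ k, M i k * M j k = 0) (A : Finset (Fin n)) :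
    ∃ i : Fin m, (m : ℝ) ≤ (r : ℝ) ^ 2 * (KHd n r m hmn M i A) ^ 2 := by
  by_contra hcon
  push_neg at hcon
  have hr0 : (0:ℝ) < r := by positivity
  have hrR : (2:ℝ) ≤ r := by exact_mod_cast hr
  have hu : ∀ j : Fin m, (1 : ℝ) / r ^ 2 ≤ (KHu n r m hmn A j) ^ 2 := by
    intro j
    unfold KHu
    by_cases hj : Fin.castLE hmn j ∈ A
    · rw [if_pos hj]
      rw [div_le_iff₀ (by positivity)]
      have he : ((1:ℝ) - 1/r)^2 * r^2 = (r-1)^2 := by field_simp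
      rw [he]; nlinarith
    · rw [if_neg hj]
      rw [div_le_iff₀ (by positivity)]
      have he : ((0:ℝ) - 1/r)^2 * r^2 = 1 := by field_simp; ring
      rw [he]
  have hsum : (m : ℝ) * ((1:ℝ) / r ^ 2) ≤ ∑ j, (KHu n r m hmn A j) ^ 2 := by
    calc (m : ℝ) * ((1:ℝ) / r ^ 2) = ∑ _j : Fin m, (1:ℝ)/ r^2 := by
          simp [Finset.sum_const, mul_comm]
      _ ≤ _ := Finset.sum_le_sum (fun j _ => hu j)
  have hlt : ∑ i : Fin m, (r:ℝ)^2 * (KHd n r m hmn M i A) ^ 2 < ∑ _i : Fin m, (m:ℝ) :=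
    Finset.sum_lt_sum_of_nonempty
      (by have := Fin.pos_iff_nonempty.mp hm0; exact Finset.univ_nonempty)
      (fun i _ => hcon i)
  rw [← Finset.mul_sum, KH_sum_sq n r m hmn M hM1 hM2 A] at hlt
  simp only [Finset.sum_const, Finset.card_univ, Fintype.card_fin, nsmul_eq_mul] at hlt
  have h2 : (m:ℝ) * m ≤ (r:ℝ)^2 * ((m:ℝ) * ∑ j, (KHu n r m hmn A j) ^ 2) := by
    have h3 := mul_le_mul_of_nonneg_left hsum (show (0:ℝ) ≤ (r:ℝ)^2 * m by positivity)
    calc (m:ℝ) * m = (r:ℝ)^2 * m * ((m:ℝ) * (1/(r:ℝ)^2)) := by field_simp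
      _ ≤ (r:ℝ)^2 * m * ∑ j, (KHu n r m hmn A j) ^ 2 := h3
      _ = (r:ℝ)^2 * ((m:ℝ) * ∑ j, (KHu n r m hmn A j) ^ 2) := by ring
  linarith
/-- Let `r ≥ 2`, `s ≥ 1`, `t ≥ 0` with `r ∣ n`, and let `m` be an integer with
`n ≥ m > (r(r−1)(s−1) + rt)²` such that a Hadamard matrix of size `m` exists.  Then the
chromatic number of the generalized Kneser hypergraph `KH(n, r, n/r − t, s)` is at most
`2m`: there is a coloring of all `(n/r − t)`-element subsets of `{1,…,n}` in `2m` colors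
with no `r` pairwise distinct subsets having pairwise intersections of size `< s` all of
the same color. -/
theorem kneserHypergraph_chromatic_le_of_hadamard (n r s t m : ℕ) (hr : 2 ≤ r) (hs : 1 ≤ s)
    (hrn : r ∣ n) (hmn : m ≤ n) (hm : (r * (r - 1) * (s - 1) + r * t) ^ 2 < m)
    (hH : ∃ M : Matrix (Fin m) (Fin m) ℝ, (∀ i j, M i j = 1 ∨ M i j = -1) ∧
      ∀ i j, i ≠ j → ∑ k, M i k * M j k = 0) :
    ∃ f : Finset (Fin n) → Fin (2 * m),
      ∀ v : Fin r → Finset (Fin n), (∀ i, (v i).card = n / r - t) →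
        Function.Injective v → (∀ i j, i ≠ j → ((v i) ∩ (v j)).card < s) →
        ∃ i j, f (v i) ≠ f (v j) := by
  classical
  obtain ⟨M, hM1, hM2⟩ := hH
  have hm0 : 0 < m := by omega
  have hr0 : (0 : ℝ) < r := by
    have : 0 < r := by omega
    exact_mod_cast this
  have hrR : (2 : ℝ) ≤ r := by exact_mod_cast hr
  have hg := fun A => KH_exists n r m hmn hr hm0 M hM1 hM2 A
  choose g hg using hg
  refine ⟨fun A => if 0 < KHd n r m hmn M (g A) A
      then Fin.castLE (by omega) (g A)
      else ⟨m + (g A : ℕ), by have := (g A).isLt; omega⟩, ?_⟩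
  intro v hcard hinj hint
  by_cases hk : 1 ≤ n / r - t
  swap
  · -- degenerate case : all sets are empty, contradicting injectivity
    have h0 : n / r - t = 0 := by omega
    have he : ∀ i, v i = ∅ := fun i => Finset.card_eq_zero.mp (by rw [hcard i, h0])
    have heq : (⟨0, by omega⟩ : Fin r) = ⟨1, by omega⟩ := hinj (by rw [he, he])
    exact absurd (congrArg Fin.val heq) (by simp)
  by_contra hcon
  push_neg at hcon
  set l0 : Fin r := ⟨0, by omega⟩ with hl0
  set i0 : Fin m := g (v l0) with hi0
  -- all sets get the same column index and same sign
  have hkey : ∀ l, g (v l) = i0 ∧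
      ((0 < KHd n r m hmn M (g (v l)) (v l)) ↔ (0 < KHd n r m hmn M i0 (v l0))) := by
    intro l
    have h := congrArg Fin.val (hcon l l0)
    by_cases h1 : 0 < KHd n r m hmn M (g (v l)) (v l) <;>
      by_cases h2 : 0 < KHd n r m hmn M (g (v l0)) (v l0)
    · rw [if_pos h1, if_pos h2] at h
      simp only [Fin.coe_castLE] at h
      exact ⟨Fin.ext h, iff_of_true h1 h2⟩
    · rw [if_pos h1, if_neg h2] at h
      simp only [Fin.coe_castLE] at h
      exact absurd h (by have := (g (v l)).isLt; omega)
    · rw [if_neg h1, if_pos h2] at h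
      simp only [Fin.coe_castLE] at h
      exact absurd h (by have := (g (v l0)).isLt; omega)
    · rw [if_neg h1, if_neg h2] at h
      simp only [] at h
      exact ⟨Fin.ext (by omega), iff_of_false h1 h2⟩
  set T : Fin r → ℝ := fun l => KHd n r m hmn M i0 (v l) with hT
  have hT2 : ∀ l, (m : ℝ) ≤ (r : ℝ) ^ 2 * (T l) ^ 2 := by
    intro l
    have := hg (v l)
    rwa [(hkey l).1] at this
  -- a uniform sign
  obtain ⟨ε, hε1, hεT⟩ : ∃ ε : ℝ, (ε = 1 ∨ ε = -1) ∧ ∀ l, 0 < ε * T l := by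
    by_cases hsgn : 0 < KHd n r m hmn M i0 (v l0)
    · refine ⟨1, Or.inl rfl, fun l => ?_⟩
      have h1 := ((hkey l).2).mpr hsgn
      rw [(hkey l).1] at h1
      rw [one_mul]
      exact h1
    · refine ⟨-1, Or.inr rfl, fun l => ?_⟩
      have h1 : ¬ (0 < KHd n r m hmn M (g (v l)) (v l)) := fun hp => hsgn (((hkey l).2).mp hp)
      rw [(hkey l).1] at h1
      have h2 : T l ≤ 0 := not_lt.mp h1
      have h3 : T l ≠ 0 := by
        intro h0
        have := hT2 l
        rw [h0] at this
        simp at this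
        omega
      have : T l < 0 := lt_of_le_of_ne h2 h3
      linarith
  have hε2 : ∀ l, (m : ℝ) ≤ (r : ℝ) ^ 2 * (ε * T l) ^ 2 := by
    intro l
    have : (ε * T l) ^ 2 = (T l) ^ 2 := by rcases hε1 with h | h <;> rw [h] <;> ring
    rw [this]; exact hT2 l
  -- lower bound on each term
  have hTle : ∀ l, Real.sqrt m / r ≤ ε * T l := by
    intro l
    have h1 : Real.sqrt m ≤ r * (ε * T l) := by
      have h2 : Real.sqrt m ≤ Real.sqrt ((r : ℝ) ^ 2 * (ε * T l) ^ 2) :=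
        Real.sqrt_le_sqrt (hε2 l)
      rwa [show (r : ℝ) ^ 2 * (ε * T l) ^ 2 = (r * (ε * T l)) ^ 2 by ring,
        Real.sqrt_sq (mul_pos hr0 (hεT l)).le] at h2
    rw [div_le_iff₀ hr0]
    linarith
  -- lower bound on the sum
  have hSlow : Real.sqrt m ≤ ∑ l, ε * T l := by
    calc Real.sqrt m = ∑ _l : Fin r, Real.sqrt m / r := by
          rw [Finset.sum_const]
          simp only [Finset.card_univ, Fintype.card_fin, nsmul_eq_mul]
          field_simp
      _ ≤ ∑ l, ε * T l := Finset.sum_le_sum fun l _ => hTle l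
  -- rewrite the sum using multiplicities
  have hswap : ∑ l, ε * T l = ∑ j : Fin m, (ε * M j i0) *
      (((Finset.univ.filter fun l => Fin.castLE hmn j ∈ v l).card : ℝ) - 1) := by
    calc ∑ l, ε * T l = ε * ∑ l, ∑ j, M j i0 * KHu n r m hmn (v l) j := by
          rw [Finset.mul_sum]
          rfl
      _ = ε * ∑ j, ∑ l, M j i0 * KHu n r m hmn (v l) j := by rw [Finset.sum_comm]
      _ = ∑ j, (ε * M j i0) * ∑ l, KHu n r m hmn (v l) j := by
          rw [Finset.mul_sum]
          exact Finset.sum_congr rfl fun j _ => by rw [Finset.mul_sum, Finset.mul_sum]; ring_nf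
      _ = _ := by
          refine Finset.sum_congr rfl fun j _ => ?_
          congr 1
          unfold KHu
          rw [Finset.sum_sub_distrib]
          congr 1
          · rw [Finset.card_filter, Nat.cast_sum]
            exact Finset.sum_congr rfl fun l _ => by
              show (if Fin.castLE hmn j ∈ v l then (1:ℝ) else 0)
                = ((if Fin.castLE hmn j ∈ v l then (1:ℕ) else 0 : ℕ) : ℝ)
              split <;> simp
          · rw [Finset.sum_const]
            simp only [Finset.card_univ, Fintype.card_fin, nsmul_eq_mul]
            field_simp
  -- upper bound via absolute values
  have habs : ∑ l, ε * T l
      ≤ ∑ j : Fin m, |((Finset.univ.filter fun l => Fin.castLE hmn j ∈ v l).card : ℝ) - 1| := by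
    rw [hswap]
    refine Finset.sum_le_sum fun j _ => ?_
    have h1 := le_abs_self (((Finset.univ.filter fun l => Fin.castLE hmn j ∈ v l).card : ℝ) - 1)
    have h2 := neg_le_abs (((Finset.univ.filter fun l => Fin.castLE hmn j ∈ v l).card : ℝ) - 1)
    rcases hM1 j i0 with h | h <;> rcases hε1 with h' | h' <;> rw [h, h'] <;> linarith
  -- extend the sum to all of Fin n
  have hembed : ∑ j : Fin m,
        |((Finset.univ.filter fun l => Fin.castLE hmn j ∈ v l).card : ℝ) - 1|
      ≤ ∑ x : Fin n, |((Finset.univ.filter fun l => x ∈ v l).card : ℝ) - 1| := by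
    have hinjc : Function.Injective (Fin.castLE hmn) := fun a b hab =>
      Fin.ext (by simpa using congrArg Fin.val hab)
    rw [show ∑ j : Fin m,
          |((Finset.univ.filter fun l => Fin.castLE hmn j ∈ v l).card : ℝ) - 1|
        = ∑ x ∈ Finset.univ.map ⟨Fin.castLE hmn, hinjc⟩,
          |((Finset.univ.filter fun l => x ∈ v l).card : ℝ) - 1| by
      rw [Finset.sum_map]; rfl]
    exact Finset.sum_le_sum_of_subset_of_nonneg (Finset.subset_univ _)
      (fun x _ _ => abs_nonneg _)
  have hcomb := KH_comb n r s t hr hs hrn v hk hcard hint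
  -- conclude
  set Q : ℕ := r * (r - 1) * (s - 1) + r * t with hQ
  have hfin : Real.sqrt m ≤ (Q : ℝ) := le_trans hSlow (le_trans habs (le_trans hembed hcomb))
  have hmQ : (m : ℝ) ≤ (Q : ℝ) * (Q : ℝ) := by
    have h1 : Real.sqrt m * Real.sqrt m = m := Real.mul_self_sqrt (by positivity)
    nlinarith [Real.sqrt_nonneg (m : ℝ)]
  have h1 : m ≤ Q * Q := by exact_mod_cast hmQ
  have h2 : Q * Q = Q ^ 2 := (sq Q).symm
  rw [h2] at h1
  exact absurd (lt_of_lt_of_le hm h1) (lt_irrefl _)
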